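/- Case-completion commutes with CaseCase-normalisation: for every term t of the lambda calculus with constructors, the CaseCase normal form of ⌈t⌉ equals the case-completion of the CaseCase normal form of t: cnf(⌈t⌉) = ⌈cnf(t)⌉. -/
import Mathlib


/- Terms of the lambda calculus with `n` constructors (de Bruijn indices).
`Ob n` plays the role of `Option (Tm n)`: a case-binding is a partial map
`Fin n → Ob n` from constructors to terms. -/
mutual
inductive Tm (n : ℕ) : Type where
  | var : ℕ → Tm n
  | app : Tm n → Tm n → Tm n
  | lam : Tm n → Tm n
  | cst : Fin n → Tm n
  | cas : (Fin n → Ob n) → Tm n → Tm n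
inductive Ob (n : ℕ) : Type where
  | none : Ob n
  | some : Tm n → Ob n
end

namespace LC

variable {n : ℕ}

/- Shift free de Bruijn indices `≥ k` by `d`. -/
mutual
def lift (d k : ℕ) : Tm n → Tm n
  | .var i => .var (if i < k then i else i + d)
  | .app t u => .app (lift d k t) (lift d k u)
  | .lam t => .lam (lift d (k+1) t)
  | .cst c => .cst c
  | .cas θ t => .cas (fun c => liftO d k (θ c)) (lift d k t)
def liftO (d k : ℕ) : Ob n → Ob n
  | .none => .none
  | .some t => .some (lift d k t)
end

/- Lift a case-binding (used for the CaseLam rule, where the bound variable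
must not occur free in the binding). -/
def liftB (θ : Fin n → Ob n) : Fin n → Ob n := fun c => liftO 1 0 (θ c)

/- Substitution of `u` for the variable `k` (capture-avoiding). -/
mutual
def subst (u : Tm n) (k : ℕ) : Tm n → Tm n
  | .var i => if i < k then .var i else if i = k then lift k 0 u else .var (i-1)
  | .app t v => .app (subst u k t) (subst u k v)
  | .lam t => .lam (subst u (k+1) t)
  | .cst c => .cst c
  | .cas θ t => .cas (fun c => substO u k (θ c)) (subst u k t)
def substO (u : Tm n) (k : ℕ) : Ob n → Ob n
  | .none => .none
  | .some t => .some (subst u k t)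
end

/- `{θ}·(-)` applied inside an optional branch. -/
def casO (θ : Fin n → Ob n) : Ob n → Ob n
  | .none => .none
  | .some u => .some (.cas θ u)

/- Composition of case-bindings: `(θ∘φ)(c) = {θ}·φ(c)` for `c ∈ dom φ`. -/
def compB (θ φ : Fin n → Ob n) : Fin n → Ob n := fun c => casO θ (φ c)

/- One-step reduction of the lambda calculus with constructors:
AppLam, LamApp, CaseCons, CaseApp, CaseLam, CaseCase, closed under all contexts. -/
inductive Step : Tm n → Tm n → Prop where
  | appLam (t u : Tm n) : Step (.app (.lam t) u) (subst u 0 t)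
  | lamApp (t : Tm n) : Step (.lam (.app (lift 1 0 t) (.var 0))) t
  | caseCons (θ : Fin n → Ob n) (c : Fin n) (u : Tm n) :
      θ c = .some u → Step (.cas θ (.cst c)) u
  | caseApp (θ : Fin n → Ob n) (t u : Tm n) :
      Step (.cas θ (.app t u)) (.app (.cas θ t) u)
  | caseLam (θ : Fin n → Ob n) (t : Tm n) :
      Step (.cas θ (.lam t)) (.lam (.cas (liftB θ) t))
  | caseCase (θ φ : Fin n → Ob n) (t : Tm n) :
      Step (.cas θ (.cas φ t)) (.cas (compB θ φ) t)
  | appL {t t' : Tm n} (u : Tm n) : Step t t' → Step (.app t u) (.app t' u)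
  | appR (t : Tm n) {u u' : Tm n} : Step u u' → Step (.app t u) (.app t u')
  | lamC {t t' : Tm n} : Step t t' → Step (.lam t) (.lam t')
  | casT (θ : Fin n → Ob n) {t t' : Tm n} : Step t t' → Step (.cas θ t) (.cas θ t')
  | casB (θ : Fin n → Ob n) (c : Fin n) {u u' : Tm n} (t : Tm n) :
      θ c = .some u → Step u u' →
      Step (.cas θ t) (.cas (Function.update θ c (.some u')) t)

/- One-step reduction by the CaseCase rule only (closed under all contexts). -/
inductive StepCC : Tm n → Tm n → Prop where
  | caseCase (θ φ : Fin n → Ob n) (t : Tm n) :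
      StepCC (.cas θ (.cas φ t)) (.cas (compB θ φ) t)
  | appL {t t' : Tm n} (u : Tm n) : StepCC t t' → StepCC (.app t u) (.app t' u)
  | appR (t : Tm n) {u u' : Tm n} : StepCC u u' → StepCC (.app t u) (.app t u')
  | lamC {t t' : Tm n} : StepCC t t' → StepCC (.lam t) (.lam t')
  | casT (θ : Fin n → Ob n) {t t' : Tm n} : StepCC t t' → StepCC (.cas θ t) (.cas θ t')
  | casB (θ : Fin n → Ob n) (c : Fin n) {u u' : Tm n} (t : Tm n) :
      θ c = .some u → StepCC u u' →
      StepCC (.cas θ t) (.cas (Function.update θ c (.some u')) t)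

/- One-step reduction λC⁻ : every rule except CaseCase (closed under all contexts). -/
inductive StepM : Tm n → Tm n → Prop where
  | appLam (t u : Tm n) : StepM (.app (.lam t) u) (subst u 0 t)
  | lamApp (t : Tm n) : StepM (.lam (.app (lift 1 0 t) (.var 0))) t
  | caseCons (θ : Fin n → Ob n) (c : Fin n) (u : Tm n) :
      θ c = .some u → StepM (.cas θ (.cst c)) u
  | caseApp (θ : Fin n → Ob n) (t u : Tm n) :
      StepM (.cas θ (.app t u)) (.app (.cas θ t) u)
  | caseLam (θ : Fin n → Ob n) (t : Tm n) :
      StepM (.cas θ (.lam t)) (.lam (.cas (liftB θ) t))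
  | appL {t t' : Tm n} (u : Tm n) : StepM t t' → StepM (.app t u) (.app t' u)
  | appR (t : Tm n) {u u' : Tm n} : StepM u u' → StepM (.app t u) (.app t u')
  | lamC {t t' : Tm n} : StepM t t' → StepM (.lam t) (.lam t')
  | casT (θ : Fin n → Ob n) {t t' : Tm n} : StepM t t' → StepM (.cas θ t) (.cas θ t')
  | casB (θ : Fin n → Ob n) (c : Fin n) {u u' : Tm n} (t : Tm n) :
      θ c = .some u → StepM u u' →
      StepM (.cas θ t) (.cas (Function.update θ c (.some u')) t)

/- A term is defined when none of its subterms is a match failure `{θ}·c` with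
`c ∉ dom θ`. -/
inductive Defined : Tm n → Prop where
  | var (i : ℕ) : Defined (.var i)
  | cst (c : Fin n) : Defined (.cst c)
  | app {t u : Tm n} : Defined t → Defined u → Defined (.app t u)
  | lam {t : Tm n} : Defined t → Defined (.lam t)
  | cas {θ : Fin n → Ob n} {t : Tm n} :
      (∀ c u, θ c = .some u → Defined u) → Defined t →
      (∀ c, t = .cst c → θ c ≠ .none) → Defined (.cas θ t)

/- Hereditarily defined: every reduct (in any number of steps) is defined. -/
def HD (t : Tm n) : Prop := ∀ u, Relation.ReflTransGen Step t u → Defined u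

section Completion
variable [NeZero n]

/- The canonical match failure `{}·c₁` used to fill missing branches. -/
def failTm : Tm n := .cas (fun _ => .none) (.cst 0)

/- Case-completion: replace every case-binding by its total completion,
filling each missing branch with `{}·c₁`. -/
mutual
def cpl : Tm n → Tm n
  | .var i => .var i
  | .app t u => .app (cpl t) (cpl u)
  | .lam t => .lam (cpl t)
  | .cst c => .cst c
  | .cas θ t => .cas (fun c => .some (cplO (θ c))) (cpl t)
def cplO : Ob n → Tm n
  | .none => failTm
  | .some u => cpl u
end

end Completion

/- The structural measure μ. -/
mutual
def mes : Tm n → ℕ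
  | .var _ => 1
  | .cst _ => 1
  | .lam t => mes t + 1
  | .app t u => mes t + mes u
  | .cas θ t => mes t * ((∑ c : Fin n, mesO (θ c)) + 2)
def mesO : Ob n → ℕ
  | .none => 0
  | .some t => mes t
end

end LC

namespace LC

variable {n : ℕ}

/- ### Positivity of the measure -/

theorem mes_pos : ∀ t : Tm n, 0 < mes t
  | .var _ => by simp [mes]
  | .cst _ => by simp [mes]
  | .lam t => by simp [mes]
  | .app t u => by have := mes_pos t; simp [mes]; omega
  | .cas θ t => by have := mes_pos t; simp [mes]; positivity

theorem mes_branch_le {θ : Fin n → Ob n} {c : Fin n} {u : Tm n} (h : θ c = .some u) :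
    mes u ≤ ∑ c : Fin n, mesO (θ c) := by
  have : mes u = mesO (θ c) := by rw [h]; rfl
  rw [this]
  exact Finset.single_le_sum (f := fun c => mesO (θ c))
    (fun _ _ => Nat.zero_le _) (Finset.mem_univ c)

theorem mes_branch_lt {θ : Fin n → Ob n} {c : Fin n} {u : Tm n} {t : Tm n}
    (h : θ c = .some u) : mes u < mes (.cas θ t) := by
  have h1 := mes_branch_le h
  have h2 := mes_pos t
  simp only [mes]
  calc mes u ≤ ∑ c : Fin n, mesO (θ c) := h1
    _ < ((∑ c : Fin n, mesO (θ c)) + 2) := by omega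
    _ ≤ mes t * ((∑ c : Fin n, mesO (θ c)) + 2) := Nat.le_mul_of_pos_left _ h2

theorem mes_subject_lt {θ : Fin n → Ob n} {t : Tm n} : mes t < mes (.cas θ t) := by
  have h2 := mes_pos t
  simp only [mes]
  calc mes t = mes t * 1 := (mul_one _).symm
    _ < mes t * ((∑ c : Fin n, mesO (θ c)) + 2) :=
        (Nat.mul_lt_mul_left h2).mpr (by omega)

theorem mesO_casO (θ : Fin n → Ob n) (o : Ob n) :
    mesO (casO θ o) = mesO o * ((∑ c : Fin n, mesO (θ c)) + 2) := by
  cases o <;> simp [casO, mesO, mes]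

theorem mes_caseCase (θ φ : Fin n → Ob n) (s : Tm n) :
    mes (.cas (compB θ φ) s) < mes (.cas θ (.cas φ s)) := by
  have h2 := mes_pos s
  simp only [mes, compB]
  simp only [mesO_casO, ← Finset.sum_mul]
  set A := ∑ c : Fin n, mesO (φ c)
  set B := ∑ c : Fin n, mesO (θ c)
  have hab : A * (B + 2) + 2 < (A + 2) * (B + 2) := by nlinarith
  calc mes s * (A * (B + 2) + 2) < mes s * ((A + 2) * (B + 2)) :=
        (Nat.mul_lt_mul_left h2).mpr hab
    _ = mes s * (A + 2) * (B + 2) := by ring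

/- ### The normalisation function -/

def nf : Tm n → Tm n
  | .var i => .var i
  | .app t u => .app (nf t) (nf u)
  | .lam t => .lam (nf t)
  | .cst c => .cst c
  | .cas θ (.cas φ s) => nf (.cas (compB θ φ) s)
  | .cas θ t =>
      .cas (fun c => match h : θ c with
        | .none => .none
        | .some u => .some (nf u)) (nf t)
termination_by t => mes t
decreasing_by
  all_goals first
    | exact mes_caseCase _ _ _
    | exact mes_branch_lt h
    | exact mes_subject_lt
    | (simp only [mes]; have h1 := mes_pos t; have h2 := mes_pos u; omega)
    | (simp only [mes]; omega)

def obNf : Ob n → Ob n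
  | .none => .none
  | .some u => .some (nf u)

theorem nf_cas_cas (θ φ : Fin n → Ob n) (s : Tm n) :
    nf (.cas θ (.cas φ s)) = nf (.cas (compB θ φ) s) := by
  rw [nf]

def NotCas : Tm n → Prop
  | .cas _ _ => False
  | _ => True

theorem NotCas.ne {t : Tm n} (h : NotCas t) :
    ∀ (φ : Fin n → Ob n) (s : Tm n), t = Tm.cas φ s → False := by
  intro φ s hh; subst hh; exact h

theorem nf_cas_ncas (θ : Fin n → Ob n) (t : Tm n) (h : NotCas t) :
    nf (.cas θ t) = .cas (fun c => obNf (θ c)) (nf t) := by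
  rw [nf.eq_6 θ t h.ne]
  congr 1; funext c; split <;> simp_all [obNf]

theorem notCas_nf : ∀ t : Tm n, NotCas t → NotCas (nf t)
  | .var _, _ => by rw [nf]; trivial
  | .app _ _, _ => by rw [nf]; trivial
  | .lam _, _ => by rw [nf]; trivial
  | .cst _, _ => by rw [nf]; trivial
  | .cas _ _, h => h.elim


/- ### Inversion for steps from a case whose subject is not a case -/

theorem stepCC_cas_inv {Θ : Fin n → Ob n} {R v : Tm n} (hR : NotCas R)
    (h : StepCC (.cas Θ R) v) :
    (∃ t', StepCC R t') ∨ (∃ c u u', Θ c = .some u ∧ StepCC u u') := by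
  cases h with
  | caseCase φ ψ s => exact hR.elim
  | casT _ h' => exact Or.inl ⟨_, h'⟩
  | casB _ c _ hc h' => exact Or.inr ⟨c, _, _, hc, h'⟩

/- ### nf is invariant under binding replacement up to nf -/

theorem nf_cas_congr (r : Tm n) (θ₁ θ₂ : Fin n → Ob n)
    (h : ∀ c, obNf (θ₁ c) = obNf (θ₂ c)) : nf (.cas θ₁ r) = nf (.cas θ₂ r) := by
  by_cases hr : NotCas r
  · rw [nf_cas_ncas _ _ hr, nf_cas_ncas _ _ hr]
    congr 1; funext c; exact h c
  · cases r with
    | var i => exact absurd trivial hr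
    | app a b => exact absurd trivial hr
    | lam a => exact absurd trivial hr
    | cst c => exact absurd trivial hr
    | cas φ s =>
      rw [nf_cas_cas, nf_cas_cas]
      apply nf_cas_congr s
      intro c
      cases hc : φ c with
      | none => simp [compB, casO, hc, obNf]
      | some u =>
        simp only [compB, casO, hc, obNf, Ob.some.injEq]
        exact nf_cas_congr u θ₁ θ₂ h
termination_by mes r
decreasing_by
  all_goals first
    | exact mes_subject_lt
    | exact mes_branch_lt hc

/- ### nf produces normal forms -/

theorem nf_normal (t : Tm n) : ∀ v, ¬ StepCC (nf t) v := by
  match t with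
  | .var i => intro v h; rw [nf] at h; cases h
  | .cst c => intro v h; rw [nf] at h; cases h
  | .app t u =>
    intro v h; rw [nf] at h
    cases h with
    | appL _ h' => exact nf_normal t _ h'
    | appR _ h' => exact nf_normal u _ h'
  | .lam t =>
    intro v h; rw [nf] at h
    cases h with
    | lamC h' => exact nf_normal t _ h'
  | .cas θ r =>
    by_cases hr : NotCas r
    · rw [nf_cas_ncas _ _ hr]
      intro v h
      rcases stepCC_cas_inv (notCas_nf r hr) h with ⟨t', h'⟩ | ⟨c, u, u', hc, h'⟩
      · exact nf_normal r _ h'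
      · cases hcθ : θ c with
        | none => rw [hcθ] at hc; simp [obNf] at hc
        | some u₀ =>
          rw [hcθ] at hc
          simp only [obNf, Ob.some.injEq] at hc
          subst hc
          exact nf_normal u₀ _ h'
    · cases r with
      | var i => exact absurd trivial hr
      | app a b => exact absurd trivial hr
      | lam a => exact absurd trivial hr
      | cst c => exact absurd trivial hr
      | cas φ s =>
        rw [nf_cas_cas]
        exact nf_normal (.cas (compB θ φ) s)
termination_by mes t
decreasing_by
  all_goals first
    | exact mes_caseCase _ _ _
    | exact mes_branch_lt hcθ
    | exact mes_subject_lt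
    | (simp only [mes]; have h1 := mes_pos t; have h2 := mes_pos u; omega)
    | (simp only [mes]; omega)

/- ### nf fixes normal forms -/

theorem nf_of_normal (t : Tm n) (h : ∀ v, ¬ StepCC t v) : nf t = t := by
  match t with
  | .var i => rw [nf]
  | .cst c => rw [nf]
  | .app t u =>
    rw [nf, nf_of_normal t (fun v hv => h _ (.appL u hv)),
      nf_of_normal u (fun v hv => h _ (.appR t hv))]
  | .lam t => rw [nf, nf_of_normal t (fun v hv => h _ (.lamC hv))]
  | .cas θ r =>
    by_cases hr : NotCas r
    · rw [nf_cas_ncas _ _ hr, nf_of_normal r (fun v hv => h _ (.casT θ hv))]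
      congr 1; funext c
      cases hc : θ c with
      | none => simp [obNf]
      | some u =>
        have hu : ∀ v, ¬ StepCC u v := fun v hv => h _ (.casB θ c r hc hv)
        simp only [obNf, Ob.some.injEq]
        exact nf_of_normal u hu
    · cases r with
      | var i => exact absurd trivial hr
      | app a b => exact absurd trivial hr
      | lam a => exact absurd trivial hr
      | cst c => exact absurd trivial hr
      | cas φ s => exact (h _ (.caseCase θ φ s)).elim
termination_by mes t
decreasing_by
  all_goals first
    | exact mes_branch_lt hc
    | exact mes_subject_lt
    | (simp only [mes]; have h1 := mes_pos t; have h2 := mes_pos u; omega)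
    | (simp only [mes]; omega)

/- ### nf is invariant under StepCC -/

theorem nf_step : ∀ {t t' : Tm n}, StepCC t t' →
    nf t = nf t' ∧ ∀ θ, nf (.cas θ t) = nf (.cas θ t') := by
  intro t t' h
  induction h with
  | caseCase θ φ s =>
    refine ⟨nf_cas_cas θ φ s, fun ψ => ?_⟩
    rw [nf_cas_cas, nf_cas_cas, nf_cas_cas]
    apply nf_cas_congr
    intro c
    cases hc : φ c with
    | none => simp [compB, casO, hc]
    | some u =>
      simp only [compB, casO, hc, obNf, Ob.some.injEq]
      exact (nf_cas_cas ψ θ u).symm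
  | @appL t t' u h ih =>
    have h1 : nf (.app t u) = nf (.app t' u) := by rw [nf, nf, ih.1]
    exact ⟨h1, fun θ => by
      rw [nf_cas_ncas θ (.app t u) trivial, nf_cas_ncas θ (.app t' u) trivial, h1]⟩
  | @appR t u u' h ih =>
    have h1 : nf (.app t u) = nf (.app t u') := by rw [nf, nf, ih.1]
    exact ⟨h1, fun θ => by
      rw [nf_cas_ncas θ (.app t u) trivial, nf_cas_ncas θ (.app t u') trivial, h1]⟩
  | @lamC t t' h ih =>
    have h1 : nf (.lam t) = nf (.lam t') := by rw [nf, nf, ih.1]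
    exact ⟨h1, fun θ => by
      rw [nf_cas_ncas θ (.lam t) trivial, nf_cas_ncas θ (.lam t') trivial, h1]⟩
  | casT θ h ih =>
    exact ⟨ih.2 θ, fun ψ => by rw [nf_cas_cas, nf_cas_cas]; exact ih.2 (compB ψ θ)⟩
  | @casB θ c u u' t hc h ih =>
    constructor
    · apply nf_cas_congr
      intro c'
      by_cases hcc : c' = c
      · subst hcc
        rw [hc, Function.update_self]
        simp only [obNf, Ob.some.injEq]
        exact ih.1
      · rw [Function.update_of_ne hcc]
    · intro ψ
      rw [nf_cas_cas, nf_cas_cas]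
      apply nf_cas_congr
      intro c'
      by_cases hcc : c' = c
      · subst hcc
        simp only [compB, casO, hc, Function.update_self, obNf, Ob.some.injEq]
        exact ih.2 ψ
      · simp only [compB, Function.update_of_ne hcc]

theorem nf_rtg {t b : Tm n} (h : Relation.ReflTransGen StepCC t b) : nf t = nf b := by
  induction h with
  | refl => rfl
  | tail _ h2 ih => rw [ih, (nf_step h2).1]

theorem nf_reaches {t b : Tm n} (h : Relation.ReflTransGen StepCC t b)
    (hb : ∀ v, ¬ StepCC b v) : nf t = b := by
  rw [nf_rtg h, nf_of_normal b hb]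

/- ### nf commutes with completion -/

section CplNf
variable [NeZero n]

theorem notCas_cpl : ∀ t : Tm n, NotCas t → NotCas (cpl t)
  | .var _, _ => by rw [cpl]; trivial
  | .app _ _, _ => by rw [cpl]; trivial
  | .lam _, _ => by rw [cpl]; trivial
  | .cst _, _ => by rw [cpl]; trivial
  | .cas _ _, h => h.elim

theorem nf_failTm : nf (failTm : Tm n) = failTm := by
  rw [failTm, nf_cas_ncas (fun _ => .none) (.cst 0) trivial, nf]
  rfl

theorem nf_cas_failTm (θ : Fin n → Ob n) : nf (.cas θ (failTm : Tm n)) = failTm := by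
  rw [failTm, nf_cas_cas]
  have h : compB θ (fun _ => (.none : Ob n)) = fun _ => .none := funext fun c => rfl
  rw [h, ← failTm, nf_failTm]

theorem nf_cpl : ∀ t : Tm n, nf (cpl t) = cpl (nf t) := by
  intro t
  match t with
  | .var i => simp only [cpl, nf]
  | .cst c => simp only [cpl, nf]
  | .app t u =>
    simp only [cpl]
    rw [nf, nf]
    simp only [cpl]
    rw [nf_cpl t, nf_cpl u]
  | .lam t =>
    simp only [cpl]
    rw [nf, nf]
    simp only [cpl]
    rw [nf_cpl t]
  | .cas θ r =>
    by_cases hr : NotCas r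
    · simp only [cpl]
      rw [nf_cas_ncas _ _ (notCas_cpl r hr), nf_cas_ncas _ _ hr]
      simp only [cpl]
      congr 1
      · funext c
        cases hc : θ c with
        | none => simp [obNf, cplO, nf_failTm]
        | some u =>
          simp only [obNf, cplO, Ob.some.injEq]
          exact nf_cpl u
      · exact nf_cpl r
    · cases r with
      | var i => exact absurd trivial hr
      | app a b => exact absurd trivial hr
      | lam a => exact absurd trivial hr
      | cst c => exact absurd trivial hr
      | cas φ s =>
        simp only [cpl]
        rw [nf_cas_cas, nf_cas_cas, ← nf_cpl (.cas (compB θ φ) s)]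
        simp only [cpl]
        apply nf_cas_congr
        intro c
        cases hc : φ c with
        | none =>
          simp only [compB, casO, hc, cplO, obNf, Ob.some.injEq]
          rw [nf_cas_failTm, nf_failTm]
        | some u =>
          simp only [compB, casO, hc, cplO, obNf, Ob.some.injEq, cpl]
termination_by t => mes t
decreasing_by
  all_goals first
    | exact mes_caseCase _ _ _
    | exact mes_branch_lt hc
    | exact mes_subject_lt
    | (simp only [mes]; have h1 := mes_pos t; have h2 := mes_pos u; omega)
    | (simp only [mes]; omega)

end CplNf

/-- Case-completion commutes with CaseCase-normalisation:
the CaseCase normal form of `⌈t⌉` equals the case-completion of the CaseCase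
normal form of `t` (normal forms being characterised as irreducible reducts). -/
theorem cnf_cpl_comm {n : ℕ} [NeZero n] {t a b : Tm n}
    (ha : Relation.ReflTransGen StepCC (cpl t) a) (hna : ∀ v, ¬ StepCC a v)
    (hb : Relation.ReflTransGen StepCC t b) (hnb : ∀ v, ¬ StepCC b v) :
    a = cpl b := by
  rw [← nf_reaches ha hna, ← nf_reaches hb hnb, nf_cpl]

end LC
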